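/- Let X be a standard Borel space. The min-intersection map (D₁, D₂) ↦ D₁ ∩ D₂ (the multiset intersection, in which the multiplicity of each element is the minimum of its multiplicities in D₁ and D₂) from Multiset X × Multiset X to Multiset X is measurable, where Multiset X carries the counting σ-algebra and Multiset X × Multiset X the corresponding product σ-algebra. -/

import Mathlib

/- `countIn D E` is the number of elements of the finite multiset `D` lying in the set `E`,
counted with multiplicity. -/
open Classical in
noncomputable def countIn {X : Type*} (D : Multiset X) (E : Set X) : ℕ :=
  (D.filter (· ∈ E)).card

/-- The counting σ-algebra on the space of finite multisets over a measurable space `X`: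
generated by the counting events `C(E,n) = {D | countIn D E = n}` for `E` measurable, `n : ℕ`. -/
def countingMS (X : Type*) [MeasurableSpace X] : MeasurableSpace (Multiset X) :=
  MeasurableSpace.generateFrom
    {C : Set (Multiset X) |
      ∃ (E : Set X) (n : ℕ), MeasurableSet E ∧ C = {D : Multiset X | countIn D E = n}}

open Classical Filter ENNReal

namespace MinInterAux

variable {X : Type*}

lemma countIn_eq_sum (D : Multiset X) (S : Set X) (T : Finset X) (hT : D.toFinset ⊆ T) :
    countIn D S = ∑ x ∈ T, if x ∈ S then D.count x else 0 := by
  have h1 : ∀ x : X, (if x ∈ S then D.count x else 0) = (D.filter (· ∈ S)).count x := by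
    intro x; rw [Multiset.count_filter]
  simp only [h1]
  have hsub : (D.filter (· ∈ S)).toFinset ⊆ T := fun x hx => hT (by
    rw [Multiset.mem_toFinset] at hx ⊢; exact Multiset.mem_of_mem_filter hx)
  rw [← Finset.sum_subset hsub
      (fun x _ hx => Multiset.count_eq_zero.2 (fun h => hx (Multiset.mem_toFinset.2 h))),
    Multiset.toFinset_sum_count_eq]
  rfl

lemma term_eq (D₁ D₂ : Multiset X) (E A : Set X)
    (hsep : ∀ x ∈ (D₁ + D₂).toFinset, ∀ y ∈ (D₁ + D₂).toFinset, x ∈ A → y ∈ A → x = y) :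
    min (countIn D₁ (E ∩ A)) (countIn D₂ (E ∩ A)) = countIn (D₁ ∩ D₂) (E ∩ A) := by
  set T := (D₁ + D₂).toFinset with hTdef
  have hT1 : D₁.toFinset ⊆ T := fun x hx => Multiset.mem_toFinset.2
    (Multiset.mem_add.2 (Or.inl (Multiset.mem_toFinset.1 hx)))
  have hT2 : D₂.toFinset ⊆ T := fun x hx => Multiset.mem_toFinset.2
    (Multiset.mem_add.2 (Or.inr (Multiset.mem_toFinset.1 hx)))
  have hT12 : (D₁ ∩ D₂).toFinset ⊆ T := fun x hx => hT1 (Multiset.mem_toFinset.2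
    (Multiset.mem_of_le Multiset.inter_le_left (Multiset.mem_toFinset.1 hx)))
  by_cases h : ∃ x ∈ T, x ∈ A
  · obtain ⟨x₀, hx₀T, hx₀A⟩ := h
    have key : ∀ D : Multiset X, D.toFinset ⊆ T →
        countIn D (E ∩ A) = if x₀ ∈ E then D.count x₀ else 0 := by
      intro D hD
      rw [countIn_eq_sum D _ T hD, Finset.sum_eq_single x₀]
      · simp [Set.mem_inter_iff, hx₀A]
      · intro y hyT hyx
        rw [if_neg]
        rintro ⟨-, hy⟩
        exact hyx (hsep y hyT x₀ hx₀T hy hx₀A)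
      · intro hx; exact absurd hx₀T hx
    rw [key D₁ hT1, key D₂ hT2, key (D₁ ∩ D₂) hT12]
    by_cases hE : x₀ ∈ E <;> simp [hE, Multiset.count_inter]
  · push_neg at h
    have key : ∀ D : Multiset X, D.toFinset ⊆ T → countIn D (E ∩ A) = 0 := by
      intro D hD
      rw [countIn_eq_sum D _ T hD]
      exact Finset.sum_eq_zero (fun x hx => if_neg (fun hmem => h x hx hmem.2))
    rw [key D₁ hT1, key D₂ hT2, key _ hT12]
    simp

lemma sum_countIn_cells (f : X → ℝ) (D : Multiset X) (E : Set X) (k : ℕ) (T : Finset X)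
    (hT : D.toFinset ⊆ T) :
    ∑ j ∈ T.image (fun x => ⌊f x * (2:ℝ) ^ k⌋),
      countIn D (E ∩ {x | ⌊f x * (2:ℝ) ^ k⌋ = j}) = countIn D E := by
  rw [countIn_eq_sum D E T hT]
  have := fun j => countIn_eq_sum D (E ∩ {x | ⌊f x * (2:ℝ) ^ k⌋ = j}) T hT
  simp only [this]
  rw [Finset.sum_comm]
  apply Finset.sum_congr rfl
  intro x hx
  simp only [Set.mem_inter_iff, Set.mem_setOf_eq]
  have hsplit : ∀ j : ℤ, (if (x ∈ E ∧ ⌊f x * (2:ℝ) ^ k⌋ = j) then D.count x else 0)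
      = if j = ⌊f x * (2:ℝ) ^ k⌋ then (if x ∈ E then D.count x else 0) else 0 := by
    intro j
    by_cases hj : j = ⌊f x * (2:ℝ) ^ k⌋
    · subst hj; simp
    · rw [if_neg hj, if_neg (fun h => hj h.2.symm)]
  simp only [hsplit]
  rw [Finset.sum_ite_eq' (T.image (fun x => ⌊f x * (2:ℝ) ^ k⌋)) (⌊f x * (2:ℝ) ^ k⌋),
    if_pos (Finset.mem_image_of_mem _ hx)]

lemma evsep (f : X → ℝ) (hf : Function.Injective f) (T : Finset X) :
    ∀ᶠ k : ℕ in atTop, ∀ x ∈ T, ∀ y ∈ T, x ≠ y →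
      (⌊f x * (2:ℝ) ^ k⌋ : ℤ) ≠ ⌊f y * (2:ℝ) ^ k⌋ := by
  rw [eventually_all_finset]
  intro x _
  rw [eventually_all_finset]
  intro y _
  by_cases hxy : x = y
  · exact Filter.Eventually.of_forall (fun k hne => absurd hxy hne)
  · have hab : f x ≠ f y := fun h => hxy (hf h)
    have hd : 0 < |f x - f y| := abs_pos.2 (sub_ne_zero.2 hab)
    obtain ⟨k₀, hk₀⟩ := pow_unbounded_of_one_lt (|f x - f y|)⁻¹ (one_lt_two : (1:ℝ) < 2)
    refine Filter.eventually_atTop.2 ⟨k₀, fun k hk _ hfl => ?_⟩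
    have h1 : |f x * (2:ℝ) ^ k - f y * (2:ℝ) ^ k| < 1 := Int.abs_sub_lt_one_of_floor_eq_floor hfl
    have h2 : |f x - f y| * (2:ℝ) ^ k < 1 := by
      rwa [← sub_mul, abs_mul, abs_of_pos (by positivity : (0:ℝ) < (2:ℝ) ^ k)] at h1
    have h3 : (2:ℝ) ^ k₀ ≤ 2 ^ k := pow_le_pow_right₀ one_le_two hk
    have h4 : (1:ℝ) < |f x - f y| * (2:ℝ) ^ k := by
      calc (1:ℝ) = |f x - f y| * |f x - f y|⁻¹ := (mul_inv_cancel₀ hd.ne').symm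
        _ < |f x - f y| * (2:ℝ) ^ k :=
            mul_lt_mul_of_pos_left (lt_of_lt_of_le hk₀ h3) hd
    linarith

end MinInterAux

open MinInterAux in
open Classical in
theorem minIntersection_measurable {X : Type*} [MeasurableSpace X] [StandardBorelSpace X] :
    @Measurable _ _ ((countingMS X).prod (countingMS X)) (countingMS X)
      (fun p : Multiset X × Multiset X => p.1 ∩ p.2) := by
  obtain ⟨f, hf⟩ := MeasureTheory.exists_measurableEmbedding_real X
  letI mX : MeasurableSpace (Multiset X) := countingMS X
  have hcnt : ∀ S : Set X, MeasurableSet S →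
      Measurable (fun D : Multiset X => countIn D S) := by
    intro S hS
    apply measurable_to_countable'
    intro n
    apply MeasurableSpace.measurableSet_generateFrom
    exact ⟨S, n, hS, by ext D; simp⟩
  have hA : ∀ (k : ℕ) (j : ℤ), MeasurableSet {x : X | ⌊f x * (2:ℝ) ^ k⌋ = j} :=
    fun k j => (hf.measurable.mul_const _).floor (measurableSet_singleton j)
  apply measurable_generateFrom
  rintro C ⟨E, n, hE, rfl⟩
  set F : ℕ → Multiset X × Multiset X → ℝ≥0∞ := fun k p =>
    ∑' j : ℤ, (min (countIn p.1 (E ∩ {x : X | ⌊f x * (2:ℝ) ^ k⌋ = j}))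
      (countIn p.2 (E ∩ {x : X | ⌊f x * (2:ℝ) ^ k⌋ = j})) : ℝ≥0∞) with hFdef
  have key : ∀ p : Multiset X × Multiset X,
      Filter.liminf (fun k => F k p) Filter.atTop = (countIn (p.1 ∩ p.2) E : ℝ≥0∞) := by
    rintro ⟨D₁, D₂⟩
    set T : Finset X := (D₁ + D₂).toFinset with hTdef
    have hT12 : (D₁ ∩ D₂).toFinset ⊆ T := fun x hx => Multiset.mem_toFinset.2
      (Multiset.mem_add.2 (Or.inl
        (Multiset.mem_of_le Multiset.inter_le_left (Multiset.mem_toFinset.1 hx))))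
    have heq : ∀ᶠ k in Filter.atTop, F k (D₁, D₂) = (countIn (D₁ ∩ D₂) E : ℝ≥0∞) := by
      filter_upwards [evsep f hf.injective T] with k hk
      have hterm : ∀ j : ℤ,
          min (countIn D₁ (E ∩ {x : X | ⌊f x * (2:ℝ) ^ k⌋ = j}))
            (countIn D₂ (E ∩ {x : X | ⌊f x * (2:ℝ) ^ k⌋ = j}))
          = countIn (D₁ ∩ D₂) (E ∩ {x : X | ⌊f x * (2:ℝ) ^ k⌋ = j}) := by
        intro j
        apply term_eq
        intro x hxT y hyT hxA hyA
        by_contra hne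
        exact hk x hxT y hyT hne
          ((Set.mem_setOf_eq ▸ hxA).trans (Set.mem_setOf_eq ▸ hyA).symm)
      have hzero : ∀ j ∉ T.image (fun x => ⌊f x * (2:ℝ) ^ k⌋),
          ((countIn (D₁ ∩ D₂) (E ∩ {x : X | ⌊f x * (2:ℝ) ^ k⌋ = j}) : ℝ≥0∞)) = 0 := by
        intro j hj
        have h0 : countIn (D₁ ∩ D₂) (E ∩ {x : X | ⌊f x * (2:ℝ) ^ k⌋ = j}) = 0 := by
          rw [countIn_eq_sum (D₁ ∩ D₂) _ T hT12]
          apply Finset.sum_eq_zero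
          intro x hx
          rw [if_neg]
          rintro ⟨-, hxA⟩
          exact hj (Finset.mem_image.2 ⟨x, hx, hxA⟩)
        rw [h0]
        exact Nat.cast_zero
      calc F k (D₁, D₂)
          = ∑' j : ℤ, (countIn (D₁ ∩ D₂) (E ∩ {x : X | ⌊f x * (2:ℝ) ^ k⌋ = j}) : ℝ≥0∞) := by
            simp only [hFdef]
            exact tsum_congr fun j => by
              rw [← Nat.mono_cast.map_min, hterm j]
        _ = ∑ j ∈ T.image (fun x => ⌊f x * (2:ℝ) ^ k⌋),
              (countIn (D₁ ∩ D₂) (E ∩ {x : X | ⌊f x * (2:ℝ) ^ k⌋ = j}) : ℝ≥0∞) :=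
            tsum_eq_sum hzero
        _ = (countIn (D₁ ∩ D₂) E : ℝ≥0∞) := by
            rw [← sum_countIn_cells f (D₁ ∩ D₂) E k T hT12, Nat.cast_sum]
    rw [Filter.liminf_congr heq, Filter.liminf_const]
  have hFmeas : ∀ k, Measurable (F k) := by
    intro k
    apply Measurable.ennreal_tsum
    intro j
    have h1 : Measurable (fun p : Multiset X × Multiset X =>
        (countIn p.1 (E ∩ {x : X | ⌊f x * (2:ℝ) ^ k⌋ = j}),
         countIn p.2 (E ∩ {x : X | ⌊f x * (2:ℝ) ^ k⌋ = j}))) :=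
      ((hcnt _ (hE.inter (hA k j))).comp measurable_fst).prod
        ((hcnt _ (hE.inter (hA k j))).comp measurable_snd)
    have h2 := (measurable_of_countable
      (fun q : ℕ × ℕ => min (q.1 : ℝ≥0∞) (q.2 : ℝ≥0∞))).comp h1
    exact h2
  have hset : (fun p : Multiset X × Multiset X => p.1 ∩ p.2) ⁻¹'
      {D : Multiset X | countIn D E = n}
      = (fun p => Filter.liminf (fun k => F k p) Filter.atTop) ⁻¹' {(n : ℝ≥0∞)} := by
    ext p
    simp only [Set.mem_preimage, Set.mem_setOf_eq, Set.mem_singleton_iff, key p,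
      Nat.cast_inj]
  rw [hset]
  exact (Measurable.liminf hFmeas) (measurableSet_singleton _)
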